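/- If k_1, k_2, k_3 are positive integers, then the multinomial coefficient (k_1+k_2+k_3)!/(k_1!k_2!k_3!) is not a prime power p^r with p prime and r ≥ 1. -/

import Mathlib

open Nat

private lemma le_choose_aux : ∀ m j : ℕ, 1 ≤ j → j + 1 ≤ m → m ≤ m.choose j := by
  intro m
  induction m with
  | zero => intro j h1 h2; omega
  | succ n ih =>
    intro j h1 h2
    obtain ⟨j, rfl⟩ : ∃ j', j = j' + 1 := ⟨j - 1, by omega⟩
    rw [Nat.choose_succ_succ]
    simp only [Nat.succ_eq_add_one]
    rcases Nat.eq_zero_or_pos j with rfl | hj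
    · simp [Nat.choose_one_right]
    · have ha := ih j hj (by omega)
      have hb := Nat.choose_pos (show j + 1 ≤ n by omega)
      omega

private lemma lt_choose_aux (n k : ℕ) (h2 : 2 ≤ k) (hk : k + 2 ≤ n) : n < n.choose k := by
  obtain ⟨m, rfl⟩ : ∃ m, n = m + 1 := ⟨n - 1, by omega⟩
  obtain ⟨j, rfl⟩ : ∃ j, k = j + 1 := ⟨k - 1, by omega⟩
  rw [Nat.choose_succ_succ]
  simp only [Nat.succ_eq_add_one]
  have ha := le_choose_aux m j (by omega) (by omega)
  have hb := le_choose_aux m (j + 1) (by omega) (by omega)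
  omega

private lemma multi_eq (a b c : ℕ) :
    (a + b + c).factorial / (a.factorial * b.factorial * c.factorial)
      = (a + b + c).choose a * (b + c).choose b := by
  have h1 := Nat.choose_mul_factorial_mul_factorial (show a ≤ a + b + c by omega)
  rw [show a + b + c - a = b + c by omega] at h1
  have h2 := Nat.choose_mul_factorial_mul_factorial (show b ≤ b + c by omega)
  rw [show b + c - b = c by omega] at h2
  have key : (a + b + c).factorial
      = ((a + b + c).choose a * (b + c).choose b) * (a.factorial * b.factorial * c.factorial) := by
    calc (a + b + c).factorial = (a + b + c).choose a * a.factorial * (b + c).factorial := h1.symm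
    _ = (a + b + c).choose a * a.factorial * ((b + c).choose b * b.factorial * c.factorial) := by
        rw [h2]
    _ = _ := by ring
  rw [key, Nat.mul_div_cancel]
  positivity

private lemma key_lemma (a b c p r : ℕ) (hp : p.Prime)
    (h : (a + b + c).factorial / (a.factorial * b.factorial * c.factorial) = p ^ r)
    (hb : 0 < b) (hc : 0 < c) (ha2 : 2 ≤ a) : False := by
  rw [multi_eq] at h
  have hdvd : (a + b + c).choose a ∣ p ^ r := ⟨(b + c).choose b, h.symm⟩
  obtain ⟨s, hs, hCs⟩ := (Nat.dvd_prime_pow hp).mp hdvd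
  have hle : p ^ s ≤ a + b + c := by
    have h0 : ((a + b + c).choose a).factorization p = s := by
      rw [hCs, hp.factorization_pow]
      simp
    have := Nat.pow_factorization_choose_le (p := p) (n := a + b + c) (k := a) (by omega)
    rwa [h0] at this
  have hlt := lt_choose_aux (a + b + c) a ha2 (by omega)
  omega

theorem trinomial_not_prime_pow (k₁ k₂ k₃ : ℕ) (h₁ : 0 < k₁) (h₂ : 0 < k₂) (h₃ : 0 < k₃) :
    ¬ ∃ (p r : ℕ), p.Prime ∧ 1 ≤ r ∧
      (k₁ + k₂ + k₃).factorial / (k₁.factorial * k₂.factorial * k₃.factorial) = p ^ r := by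
  rintro ⟨p, r, hp, hr, heq⟩
  have e2 : (k₂ + k₁ + k₃).factorial / (k₂.factorial * k₁.factorial * k₃.factorial) = p ^ r := by
    rw [show k₂ + k₁ + k₃ = k₁ + k₂ + k₃ by ring, show k₂.factorial * k₁.factorial * k₃.factorial
      = k₁.factorial * k₂.factorial * k₃.factorial by ring]; exact heq
  have e3 : (k₃ + k₁ + k₂).factorial / (k₃.factorial * k₁.factorial * k₂.factorial) = p ^ r := by
    rw [show k₃ + k₁ + k₂ = k₁ + k₂ + k₃ by ring, show k₃.factorial * k₁.factorial * k₂.factorial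
      = k₁.factorial * k₂.factorial * k₃.factorial by ring]; exact heq
  have hk1 : k₁ < 2 := by
    by_contra h; exact key_lemma k₁ k₂ k₃ p r hp heq h₂ h₃ (by omega)
  have hk2 : k₂ < 2 := by
    by_contra h; exact key_lemma k₂ k₁ k₃ p r hp e2 h₁ h₃ (by omega)
  have hk3 : k₃ < 2 := by
    by_contra h; exact key_lemma k₃ k₁ k₂ p r hp e3 h₁ h₂ (by omega)
  obtain rfl : k₁ = 1 := by omega
  obtain rfl : k₂ = 1 := by omega
  obtain rfl : k₃ = 1 := by omega
  norm_num [Nat.factorial] at heq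
  -- heq : 6 = p ^ r
  have hpdvd : p ∣ 6 := heq ▸ dvd_pow_self p (by omega)
  have hp6 : p ≤ 6 := Nat.le_of_dvd (by norm_num) hpdvd
  have hp2 : 2 ≤ p := hp.two_le
  have hr3 : r < 3 := by
    by_contra hcon
    have : 2 ^ 3 ≤ p ^ r := le_trans (Nat.pow_le_pow_right (by omega) (by omega))
      (Nat.pow_le_pow_left hp2 r)
    omega
  interval_cases p <;> interval_cases r <;> revert hp heq <;> decide
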